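/- Let H ∈ (0,1/2) and θ > 0. Then lim_{T→∞} ‖e^{-θ(T-·)}1_{[0,T]}(·)‖²_{𝔥₁} = HΓ(2H)θ^{-2H}, where ‖f‖²_{𝔥₁} = -∫₀ᵀ∫₀ᵀ f(t) (∂R^B(t,s)/∂t) dt ν_f(ds) for the fBm-associated Hilbert space; concretely for f(t) = e^{-θ(T-t)}1_{[0,T]}(t) this equals ∫₀ᵀ∫₀ᵀ θ e^{-θ(T-t)-θ(T-s)} H(t^{2H-1} - sgn(t-s)|t-s|^{2H-1}) dt ds plus boundary terms, and the limit as T → ∞ is HΓ(2H)θ^{-2H}. -/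

import Mathlib

open MeasureTheory Real Set Filter Topology

lemma measurable_realSign : Measurable Real.sign := by
  unfold Real.sign
  exact Measurable.ite (measurableSet_lt measurable_id measurable_const) measurable_const
    (Measurable.ite (measurableSet_lt measurable_const measurable_id) measurable_const
      measurable_const)

lemma absRpow_intervalIntegrable {p : ℝ} (hp : -1 < p) (a b : ℝ) :
    IntervalIntegrable (fun x => |x| ^ p) volume a b := by
  have key : ∀ c : ℝ, 0 ≤ c → IntervalIntegrable (fun x => |x| ^ p) volume 0 c := by
    intro c hc
    have h1 : IntervalIntegrable (fun x => x ^ p) volume 0 c :=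
      intervalIntegral.intervalIntegrable_rpow' hp
    rw [intervalIntegrable_iff, uIoc_of_le hc] at h1 ⊢
    exact h1.congr_fun (fun x hx => by rw [abs_of_pos hx.1]) measurableSet_Ioc
  have key2 : ∀ c : ℝ, IntervalIntegrable (fun x => |x| ^ p) volume 0 c := by
    intro c
    rcases le_total 0 c with h | h
    · exact key c h
    · have := key (-c) (by linarith)
      have h2 := (IntervalIntegrable.iff_comp_neg).mp this
      simp only [abs_neg, neg_zero, neg_neg] at h2
      exact h2
  exact ((key2 a).symm.trans (key2 b))

lemma slice_int {p : ℝ} (hp : -1 < p) (t T : ℝ) (hT : 0 ≤ T) :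
    IntegrableOn (fun s => |t - s| ^ p) (Ioc 0 T) volume := by
  have h := (absRpow_intervalIntegrable hp t (t - T)).comp_sub_left t
  simp only [sub_self, sub_sub_cancel] at h
  rwa [intervalIntegrable_iff, uIoc_of_le hT] at h

lemma slice_bound {p : ℝ} (hp : -1 < p) {t T : ℝ} (ht : t ∈ Icc 0 T) :
    ∫ s in Ioc (0:ℝ) T, |t - s| ^ p ≤ ∫ u in Ioc (-T) T, |u| ^ p := by
  have hT : (0:ℝ) ≤ T := ht.1.trans ht.2
  have h1 : ∫ s in Ioc (0:ℝ) T, |t - s| ^ p = ∫ u in Ioc (t - T) t, |u| ^ p := by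
    rw [← intervalIntegral.integral_of_le hT,
      intervalIntegral.integral_comp_sub_left (fun u => |u| ^ p) t]
    rw [sub_zero, intervalIntegral.integral_of_le (by linarith [ht.2] : t - T ≤ t)]
  rw [h1]
  have hint : IntegrableOn (fun u => |u| ^ p) (Ioc (-T) T) volume := by
    have := absRpow_intervalIntegrable hp (-T) T
    rwa [intervalIntegrable_iff, uIoc_of_le (by linarith)] at this
  refine setIntegral_mono_set hint ?_ ?_
  · exact Filter.Eventually.of_forall fun u => by positivity
  · exact HasSubset.Subset.eventuallyLE fun u hu =>
      ⟨by linarith [hu.1, ht.1], le_trans hu.2 ht.2⟩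

lemma measurable_abs_rpow (p : ℝ) : Measurable fun x : ℝ => |x| ^ p := by
  have h : ∀ x : ℝ, |x| ^ p =
      if |x| = 0 then (if p = 0 then 1 else 0) else Real.exp (Real.log |x| * p) := by
    intro x
    rcases eq_or_ne (|x|) 0 with h0 | h0
    · rw [h0, if_pos rfl]
      rcases eq_or_ne p 0 with hp | hp
      · simp [hp]
      · simp [Real.zero_rpow hp, hp]
    · rw [if_neg h0, Real.rpow_def_of_pos (lt_of_le_of_ne (abs_nonneg x) (Ne.symm h0))]
  simp_rw [h]
  refine Measurable.ite ?_ measurable_const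
    (Real.measurable_exp.comp ((Real.measurable_log.comp measurable_abs).mul measurable_const))
  exact measurable_abs (measurableSet_singleton 0)

lemma dom_meas {p : ℝ} : Measurable (fun z : ℝ × ℝ => |z.1 - z.2| ^ p) :=
  (measurable_abs_rpow p).comp (measurable_fst.sub measurable_snd)

lemma dom_int {p : ℝ} (hp : -1 < p) (T : ℝ) (hT : 0 ≤ T) :
    Integrable (fun z : ℝ × ℝ => |z.1 - z.2| ^ p)
      ((volume.restrict (Ioc 0 T)).prod (volume.restrict (Ioc 0 T))) := by
  set μ : Measure ℝ := volume.restrict (Ioc 0 T) with hμ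
  haveI : IsFiniteMeasure μ := ⟨by
    rw [Measure.restrict_apply_univ]; exact measure_Ioc_lt_top⟩
  have hm : AEStronglyMeasurable (fun z : ℝ × ℝ => |z.1 - z.2| ^ p) (μ.prod μ) :=
    dom_meas.aestronglyMeasurable
  rw [integrable_prod_iff hm]
  constructor
  · exact Filter.Eventually.of_forall fun t => slice_int hp t T hT
  · have hb : ∀ᵐ t ∂μ, ‖∫ s, ‖|t - s| ^ p‖ ∂μ‖ ≤ ∫ u in Ioc (-T) T, |u| ^ p := by
      rw [hμ, ae_restrict_iff' measurableSet_Ioc]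
      refine Filter.Eventually.of_forall fun t ht => ?_
      have h1 : ∀ s, ‖|t - s| ^ p‖ = |t - s| ^ p := fun s => by
        rw [Real.norm_eq_abs, abs_of_nonneg (by positivity)]
      simp_rw [h1]
      rw [Real.norm_eq_abs, abs_of_nonneg (integral_nonneg fun s => by positivity)]
      exact slice_bound hp ⟨ht.1.le, ht.2⟩
    exact Integrable.mono' (integrable_const _)
      (hm.norm.integral_prod_right') hb

lemma measurable_rpow_const (p : ℝ) : Measurable fun x : ℝ => x ^ p := by
  have h : ∀ x : ℝ, x ^ p = if x = 0 then (if p = 0 then 1 else 0)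
      else if x < 0 then Real.exp (Real.log x * p) * Real.cos (p * π)
      else Real.exp (Real.log x * p) := by
    intro x
    rcases lt_trichotomy x 0 with hx | hx | hx
    · rw [if_neg hx.ne, if_pos hx, Real.rpow_def_of_neg hx]
    · subst hx
      rw [if_pos rfl]
      rcases eq_or_ne p 0 with hp | hp
      · simp [hp]
      · simp [Real.zero_rpow hp, hp]
    · rw [if_neg hx.ne', if_neg (not_lt.mpr hx.le), Real.rpow_def_of_pos hx]
  simp_rw [h]
  refine Measurable.ite (measurableSet_singleton 0) measurable_const ?_
  refine Measurable.ite (measurableSet_lt measurable_id measurable_const) ?_ ?_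
  · exact (Real.measurable_exp.comp (Real.measurable_log.mul measurable_const)).mul
      measurable_const
  · exact Real.measurable_exp.comp (Real.measurable_log.mul measurable_const)

lemma abs_realSign_le_one (x : ℝ) : |Real.sign x| ≤ 1 := by
  rcases Real.sign_apply_eq x with h | h | h <;> rw [h] <;> norm_num

lemma k_meas (H θ T p : ℝ) :
    Measurable (fun z : ℝ × ℝ => Real.exp (-θ * (T - z.1) - θ * (T - z.2)) *
      (H * (Real.sign (z.1 - z.2) * |z.1 - z.2| ^ p))) := by
  refine Measurable.mul ?_ (Measurable.const_mul ?_ H)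
  · exact Real.measurable_exp.comp
      (((measurable_const.sub measurable_fst).const_mul (-θ)).sub
        ((measurable_const.sub measurable_snd).const_mul θ))
  · exact (measurable_realSign.comp (measurable_fst.sub measurable_snd)).mul
      ((measurable_rpow_const p).comp (measurable_fst.sub measurable_snd).abs)

lemma k_int {H θ T p : ℝ} (hp : -1 < p) (hθ : 0 < θ) (hT : 0 ≤ T) :
    Integrable (fun z : ℝ × ℝ => Real.exp (-θ * (T - z.1) - θ * (T - z.2)) *
      (H * (Real.sign (z.1 - z.2) * |z.1 - z.2| ^ p)))
      ((volume.restrict (Ioc 0 T)).prod (volume.restrict (Ioc 0 T))) := by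
  refine Integrable.mono' ((dom_int hp T hT).const_mul |H|)
    (k_meas H θ T p).aestronglyMeasurable ?_
  rw [Measure.prod_restrict, ae_restrict_iff' (measurableSet_Ioc.prod measurableSet_Ioc)]
  refine Filter.Eventually.of_forall fun z hz => ?_
  obtain ⟨hz1, hz2⟩ := hz
  have he : Real.exp (-θ * (T - z.1) - θ * (T - z.2)) ≤ 1 := by
    rw [Real.exp_le_one_iff]
    nlinarith [hz1.2, hz2.2, hθ.le]
  have hw : (0:ℝ) ≤ |z.1 - z.2| ^ p := Real.rpow_nonneg (abs_nonneg _) _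
  rw [Real.norm_eq_abs, abs_mul, abs_mul, abs_mul, Real.abs_exp]
  calc Real.exp (-θ * (T - z.1) - θ * (T - z.2)) *
        (|H| * (|Real.sign (z.1 - z.2)| * |(|z.1 - z.2| ^ p)|))
      ≤ 1 * (|H| * (1 * |z.1 - z.2| ^ p)) := by
        rw [abs_of_nonneg hw]
        gcongr
        · exact abs_realSign_le_one _
    _ = |H| * |z.1 - z.2| ^ p := by ring

lemma f_int {H θ T p : ℝ} (hp : -1 < p) (hθ : 0 < θ) (hT : 0 ≤ T) :
    IntegrableOn (fun t => Real.exp (-θ * (T - t)) * (H * t ^ p)) (Ioc 0 T) volume := by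
  have h1 : IntegrableOn (fun t : ℝ => |H| * t ^ p) (Ioc 0 T) volume := by
    have := (intervalIntegral.intervalIntegrable_rpow' hp (a := (0:ℝ)) (b := T)).const_mul |H|
    rwa [intervalIntegrable_iff, uIoc_of_le hT] at this
  refine Integrable.mono' h1 ?_ ?_
  · exact ((Real.measurable_exp.comp ((measurable_const.sub measurable_id).const_mul (-θ))).mul
      ((measurable_rpow_const p).const_mul H)).aestronglyMeasurable
  · rw [ae_restrict_iff' measurableSet_Ioc]
    refine Filter.Eventually.of_forall fun t ht => ?_
    have htp : (0:ℝ) ≤ t ^ p := Real.rpow_nonneg ht.1.le _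
    have he : Real.exp (-θ * (T - t)) ≤ 1 := by
      rw [Real.exp_le_one_iff]
      nlinarith [ht.2]
    rw [Real.norm_eq_abs, abs_mul, abs_mul, Real.abs_exp, abs_of_nonneg htp]
    calc Real.exp (-θ * (T - t)) * (|H| * t ^ p) ≤ 1 * (|H| * t ^ p) := by gcongr
      _ = |H| * t ^ p := one_mul _

lemma f2_int {H θ T p : ℝ} (hp : -1 < p) (hθ : 0 < θ) (hT : 0 ≤ T) :
    IntegrableOn (fun t => Real.exp (-θ * (T - t)) * (H * (T - t) ^ p)) (Ioc 0 T) volume := by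
  have h1 : IntegrableOn (fun t : ℝ => |H| * (T - t) ^ p) (Ioc 0 T) volume := by
    have h0 := (intervalIntegral.intervalIntegrable_rpow' hp (a := T) (b := (0:ℝ))).comp_sub_left T
    simp only [sub_self, sub_zero] at h0
    have := h0.const_mul |H|
    rwa [intervalIntegrable_iff, uIoc_of_le hT] at this
  refine Integrable.mono' h1 ?_ ?_
  · exact ((Real.measurable_exp.comp ((measurable_const.sub measurable_id).const_mul (-θ))).mul
      (((measurable_rpow_const p).comp (measurable_const.sub measurable_id)).const_mul
        H)).aestronglyMeasurable
  · rw [ae_restrict_iff' measurableSet_Ioc]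
    refine Filter.Eventually.of_forall fun t ht => ?_
    have htp : (0:ℝ) ≤ (T - t) ^ p := Real.rpow_nonneg (by linarith [ht.2]) _
    have he : Real.exp (-θ * (T - t)) ≤ 1 := by
      rw [Real.exp_le_one_iff]
      nlinarith [ht.2]
    rw [Real.norm_eq_abs, abs_mul, abs_mul, Real.abs_exp, abs_of_nonneg htp]
    calc Real.exp (-θ * (T - t)) * (|H| * (T - t) ^ p) ≤ 1 * (|H| * (T - t) ^ p) := by gcongr
      _ = |H| * (T - t) ^ p := one_mul _

lemma double_eq {H θ T p : ℝ} (hp : -1 < p) (hθ : 0 < θ) (hT : 0 ≤ T) :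
    (∫ t in Ioc (0:ℝ) T, ∫ s in Ioc (0:ℝ) T,
        Real.exp (-θ * (T - t) - θ * (T - s)) *
          (H * (t ^ p - Real.sign (t - s) * |t - s| ^ p)))
      = (∫ t in Ioc (0:ℝ) T, Real.exp (-θ * (T - t)) * (H * t ^ p))
        * ∫ s in Ioc (0:ℝ) T, Real.exp (-θ * (T - s)) := by
  set μ := volume.restrict (Ioc (0:ℝ) T) with hμdef
  set f : ℝ → ℝ := fun t => Real.exp (-θ * (T - t)) * (H * t ^ p) with hfdef
  set g : ℝ → ℝ := fun s => Real.exp (-θ * (T - s)) with hgdef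
  set k : ℝ × ℝ → ℝ := fun z => Real.exp (-θ * (T - z.1) - θ * (T - z.2)) *
    (H * (Real.sign (z.1 - z.2) * |z.1 - z.2| ^ p)) with hkdef
  have hf : Integrable f μ := f_int hp hθ hT
  have hg : Integrable g μ := by
    apply Continuous.integrableOn_Ioc
    exact Real.continuous_exp.comp (continuous_const.mul (continuous_const.sub continuous_id))
  have hfg : Integrable (fun z : ℝ × ℝ => f z.1 * g z.2) (μ.prod μ) := hf.mul_prod hg
  have hk : Integrable k (μ.prod μ) := k_int hp hθ hT
  have hpt : ∀ z : ℝ × ℝ, Real.exp (-θ * (T - z.1) - θ * (T - z.2)) *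
      (H * (z.1 ^ p - Real.sign (z.1 - z.2) * |z.1 - z.2| ^ p)) = f z.1 * g z.2 - k z := by
    intro z
    simp only [hfdef, hgdef, hkdef]
    rw [show -θ * (T - z.1) - θ * (T - z.2) = (-θ * (T - z.1)) + (-θ * (T - z.2)) by ring,
      Real.exp_add]
    ring
  have hh : Integrable (Function.uncurry fun t s => Real.exp (-θ * (T - t) - θ * (T - s)) *
      (H * (t ^ p - Real.sign (t - s) * |t - s| ^ p))) (μ.prod μ) := by
    refine (hfg.sub hk).congr (Filter.Eventually.of_forall fun z => (hpt z).symm)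
  rw [MeasureTheory.integral_integral hh]
  rw [integral_congr_ae (Filter.Eventually.of_forall hpt)]
  rw [integral_sub hfg hk]
  have hk0 : ∫ z, k z ∂(μ.prod μ) = 0 := by
    have hks : ∀ z : ℝ × ℝ, k z.swap = -k z := by
      intro z
      simp only [hkdef, Prod.fst_swap, Prod.snd_swap]
      rw [show z.2 - z.1 = -(z.1 - z.2) by ring, Real.sign_neg, abs_neg,
        show -θ * (T - z.2) - θ * (T - z.1) = -θ * (T - z.1) - θ * (T - z.2) by ring]
      ring
    have h1 : ∫ z, k z ∂(μ.prod μ) = -∫ z, k z ∂(μ.prod μ) := by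
      conv_lhs => rw [← integral_prod_swap k]
      rw [integral_congr_ae (Filter.Eventually.of_forall hks), integral_neg]
    linarith
  rw [hk0, sub_zero, integral_prod_mul]

lemma boundary_eq {H θ T p : ℝ} (hp : -1 < p) (hθ : 0 < θ) (hT : 0 ≤ T) :
    ∫ t in Ioc (0:ℝ) T, Real.exp (-θ * (T - t)) * (H * (t ^ p + (T - t) ^ p))
      = (∫ t in Ioc (0:ℝ) T, Real.exp (-θ * (T - t)) * (H * t ^ p))
        + ∫ u in Ioc (0:ℝ) T, Real.exp (-θ * u) * (H * u ^ p) := by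
  have h1 : ∫ t in Ioc (0:ℝ) T, Real.exp (-θ * (T - t)) * (H * (t ^ p + (T - t) ^ p))
      = (∫ t in Ioc (0:ℝ) T, Real.exp (-θ * (T - t)) * (H * t ^ p))
        + ∫ t in Ioc (0:ℝ) T, Real.exp (-θ * (T - t)) * (H * (T - t) ^ p) := by
    rw [← integral_add (f_int hp hθ hT) (f2_int hp hθ hT)]
    exact integral_congr_ae (Filter.Eventually.of_forall fun t => by ring)
  rw [h1]
  congr 1
  rw [← intervalIntegral.integral_of_le hT, ← intervalIntegral.integral_of_le hT,
    intervalIntegral.integral_comp_sub_left (fun u => Real.exp (-θ * u) * (H * u ^ p)) T,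
    sub_self, sub_zero]

lemma gamma_int {H θ : ℝ} (hH : 0 < H) (hH2 : H < 1/2) (hθ : 0 < θ) :
    IntegrableOn (fun u : ℝ => u ^ (2*H - 1) * Real.exp (-(θ * u))) (Ioi 0) volume := by
  have hp : (-1:ℝ) < 2*H - 1 := by linarith
  have h1 : IntegrableOn (fun u : ℝ => u ^ (2*H - 1) * Real.exp (-(θ * u))) (Ioc 0 1) volume := by
    have hbase : IntegrableOn (fun u : ℝ => u ^ (2*H - 1)) (Ioc (0:ℝ) 1) volume := by
      have := intervalIntegral.intervalIntegrable_rpow' hp (a := (0:ℝ)) (b := 1)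
      rwa [intervalIntegrable_iff, uIoc_of_le zero_le_one] at this
    refine Integrable.mono' hbase ?_ ?_
    · exact ((measurable_rpow_const (2*H-1)).mul
        (Real.measurable_exp.comp (measurable_id.const_mul θ).neg)).aestronglyMeasurable
    · rw [ae_restrict_iff' measurableSet_Ioc]
      refine Filter.Eventually.of_forall fun u hu => ?_
      have h0 : (0:ℝ) ≤ u ^ (2*H-1) := Real.rpow_nonneg hu.1.le _
      rw [Real.norm_eq_abs, abs_mul, abs_of_nonneg h0, Real.abs_exp]
      nlinarith [Real.exp_le_one_iff.mpr (by nlinarith [hu.1.le] : -(θ*u) ≤ 0), Real.exp_pos (-(θ*u))]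
  have h2 : IntegrableOn (fun u : ℝ => u ^ (2*H - 1) * Real.exp (-(θ * u))) (Ioi 1) volume := by
    refine Integrable.mono' (exp_neg_integrableOn_Ioi 1 hθ) ?_ ?_
    · exact ((measurable_rpow_const (2*H-1)).mul
        (Real.measurable_exp.comp (measurable_id.const_mul θ).neg)).aestronglyMeasurable
    · rw [ae_restrict_iff' measurableSet_Ioi]
      refine Filter.Eventually.of_forall fun u hu => ?_
      have h0 : (0:ℝ) ≤ u ^ (2*H-1) := Real.rpow_nonneg (by linarith [mem_Ioi.mp hu]) _
      have h3 : u ^ (2*H-1) ≤ 1 :=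
        Real.rpow_le_one_of_one_le_of_nonpos (le_of_lt (mem_Ioi.mp hu)) (by linarith)
      rw [Real.norm_eq_abs, abs_mul, abs_of_nonneg h0, Real.abs_exp]
      calc u ^ (2*H-1) * Real.exp (-(θ*u)) ≤ 1 * Real.exp (-(θ*u)) := by gcongr
        _ = Real.exp (-θ*u) := by rw [one_mul, neg_mul]
  rw [show Ioi (0:ℝ) = Ioc 0 1 ∪ Ioi 1 from (Ioc_union_Ioi_eq_Ioi zero_le_one).symm]
  exact h1.union h2

lemma tendstoJ {H θ : ℝ} (hH : 0 < H) (hH2 : H < 1/2) (hθ : 0 < θ) :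
    Tendsto (fun T : ℝ => ∫ u in Ioc (0:ℝ) T, Real.exp (-θ * u) * (H * u ^ (2*H - 1))) atTop
      (𝓝 (H * Real.Gamma (2*H) * θ ^ (-(2*H)))) := by
  have h2H : (0:ℝ) < 2*H := by linarith
  have hbase : Tendsto (fun T : ℝ => ∫ u in (0:ℝ)..T, u ^ (2*H-1) * Real.exp (-(θ * u))) atTop
      (𝓝 ((1/θ) ^ (2*H) * Real.Gamma (2*H))) := by
    have := intervalIntegral_tendsto_integral_Ioi 0 (gamma_int hH hH2 hθ) tendsto_id
    rwa [Real.integral_rpow_mul_exp_neg_mul_Ioi h2H hθ] at this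
  have hval : H * ((1/θ) ^ (2*H) * Real.Gamma (2*H)) = H * Real.Gamma (2*H) * θ ^ (-(2*H)) := by
    rw [one_div, Real.inv_rpow hθ.le, ← Real.rpow_neg hθ.le]
    ring
  have hmain := hbase.const_mul H
  rw [hval] at hmain
  refine hmain.congr' ?_
  filter_upwards [Filter.eventually_ge_atTop (0:ℝ)] with T hT
  rw [← intervalIntegral.integral_const_mul, ← intervalIntegral.integral_of_le hT]
  congr 1
  funext u
  rw [neg_mul]
  ring

lemma exp_int_eval {θ T : ℝ} (a b : ℝ) (hθ : 0 < θ) :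
    ∫ t in a..b, Real.exp (-θ * (T - t))
      = Real.exp (-θ * (T - b)) / θ - Real.exp (-θ * (T - a)) / θ := by
  have hd : ∀ t ∈ uIcc a b, HasDerivAt (fun t => Real.exp (-θ * (T - t)) / θ)
      (Real.exp (-θ * (T - t))) t := by
    intro t _
    have h1 : HasDerivAt (fun t : ℝ => -θ * (T - t)) θ t := by
      have := ((hasDerivAt_id t).const_sub T).const_mul (-θ)
      refine this.congr_deriv ?_
      ring
    have h3 := ((Real.hasDerivAt_exp (-θ * (T - t))).comp t h1).div_const θ
    refine h3.congr_deriv ?_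
    field_simp
  rw [intervalIntegral.integral_eq_sub_of_hasDerivAt hd]
  exact (Real.continuous_exp.comp
    (continuous_const.mul (continuous_const.sub continuous_id))).intervalIntegrable a b

lemma tendstoA {H θ : ℝ} (hH : 0 < H) (hH2 : H < 1/2) (hθ : 0 < θ) :
    Tendsto (fun T : ℝ => ∫ t in Ioc (0:ℝ) T, Real.exp (-θ * (T - t)) * (H * t ^ (2*H - 1)))
      atTop (𝓝 0) := by
  set p : ℝ := 2*H - 1 with hpdef
  have hp : (-1:ℝ) < p := by rw [hpdef]; linarith
  have hp0 : p ≤ 0 := by rw [hpdef]; linarith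
  have hp1 : (0:ℝ) < p + 1 := by linarith
  have hlow : ∀ T : ℝ, 0 ≤ ∫ t in Ioc (0:ℝ) T, Real.exp (-θ * (T - t)) * (H * t ^ p) := by
    intro T
    refine setIntegral_nonneg measurableSet_Ioc fun t ht => ?_
    exact mul_nonneg (Real.exp_pos _).le (mul_nonneg hH.le (Real.rpow_nonneg ht.1.le _))
  have hupper : ∀ T : ℝ, 1 ≤ T →
      (∫ t in Ioc (0:ℝ) T, Real.exp (-θ * (T - t)) * (H * t ^ p))
        ≤ Real.exp (-θ * (T/2)) * H * ((T/2) ^ (p+1) / (p+1)) + H * (T/2) ^ p * (1/θ) := by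
    intro T hT1
    have hT0 : (0:ℝ) ≤ T := by linarith
    have hT2 : (0:ℝ) ≤ T/2 := by linarith
    have h2T : T/2 ≤ T := by linarith
    have hII : IntervalIntegrable (fun t => Real.exp (-θ * (T - t)) * (H * t ^ p)) volume 0 T := by
      rw [intervalIntegrable_iff, uIoc_of_le hT0]
      exact f_int hp hθ hT0
    have h1 : IntervalIntegrable (fun t => Real.exp (-θ * (T - t)) * (H * t ^ p))
        volume 0 (T/2) := hII.mono_set
      (by rw [uIcc_of_le hT2, uIcc_of_le hT0]; exact Icc_subset_Icc le_rfl h2T)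
    have h2 : IntervalIntegrable (fun t => Real.exp (-θ * (T - t)) * (H * t ^ p))
        volume (T/2) T := hII.mono_set
      (by rw [uIcc_of_le h2T, uIcc_of_le hT0]; exact Icc_subset_Icc hT2 le_rfl)
    have hsplit : (∫ t in Ioc (0:ℝ) T, Real.exp (-θ * (T - t)) * (H * t ^ p))
        = (∫ t in (0:ℝ)..(T/2), Real.exp (-θ * (T - t)) * (H * t ^ p))
          + ∫ t in (T/2)..T, Real.exp (-θ * (T - t)) * (H * t ^ p) := by
      rw [← intervalIntegral.integral_of_le hT0,
        ← intervalIntegral.integral_add_adjacent_intervals h1 h2]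
    have hb1 : (∫ t in (0:ℝ)..(T/2), Real.exp (-θ * (T - t)) * (H * t ^ p))
        ≤ ∫ t in (0:ℝ)..(T/2), (Real.exp (-θ * (T/2)) * H) * t ^ p := by
      refine intervalIntegral.integral_mono_on hT2 h1
        ((intervalIntegral.intervalIntegrable_rpow' hp).const_mul _) fun t ht => ?_
      have he : Real.exp (-θ * (T - t)) ≤ Real.exp (-θ * (T/2)) := by
        apply Real.exp_le_exp.mpr
        nlinarith [ht.2]
      calc Real.exp (-θ * (T - t)) * (H * t ^ p)
          ≤ Real.exp (-θ * (T/2)) * (H * t ^ p) :=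
            mul_le_mul_of_nonneg_right he (mul_nonneg hH.le (Real.rpow_nonneg ht.1 _))
        _ = (Real.exp (-θ * (T/2)) * H) * t ^ p := by ring
    have hb1v : (∫ t in (0:ℝ)..(T/2), (Real.exp (-θ * (T/2)) * H) * t ^ p)
        = Real.exp (-θ * (T/2)) * H * ((T/2) ^ (p+1) / (p+1)) := by
      rw [intervalIntegral.integral_const_mul, integral_rpow (Or.inl hp),
        Real.zero_rpow hp1.ne', sub_zero]
    have hb2 : (∫ t in (T/2)..T, Real.exp (-θ * (T - t)) * (H * t ^ p))
        ≤ ∫ t in (T/2)..T, (H * (T/2) ^ p) * Real.exp (-θ * (T - t)) := by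
      refine intervalIntegral.integral_mono_on h2T h2
        (((Real.continuous_exp.comp (continuous_const.mul
          (continuous_const.sub continuous_id))).intervalIntegrable _ _).const_mul _)
        fun t ht => ?_
      have h4 : t ^ p ≤ (T/2) ^ p :=
        Real.rpow_le_rpow_of_nonpos (by linarith : (0:ℝ) < T/2) ht.1 hp0
      calc Real.exp (-θ * (T - t)) * (H * t ^ p)
          ≤ Real.exp (-θ * (T - t)) * (H * (T/2) ^ p) :=
            mul_le_mul_of_nonneg_left (mul_le_mul_of_nonneg_left h4 hH.le) (Real.exp_pos _).le
        _ = (H * (T/2) ^ p) * Real.exp (-θ * (T - t)) := by ring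
    have hb2v : (∫ t in (T/2)..T, (H * (T/2) ^ p) * Real.exp (-θ * (T - t)))
        ≤ H * (T/2) ^ p * (1/θ) := by
      rw [intervalIntegral.integral_const_mul, exp_int_eval _ _ hθ, sub_self, mul_zero,
        Real.exp_zero]
      have hnn : 0 ≤ H * (T/2) ^ p := mul_nonneg hH.le (Real.rpow_nonneg hT2 _)
      refine mul_le_mul_of_nonneg_left ?_ hnn
      exact sub_le_self _ (div_nonneg (Real.exp_pos _).le hθ.le)
    linarith [hsplit, hb1, hb1v, hb2, hb2v]
  have hhalf : Tendsto (fun T : ℝ => T/2) atTop atTop :=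
    Tendsto.atTop_div_const (by norm_num) tendsto_id
  have t1 : Tendsto (fun x : ℝ => Real.exp (-θ * x) * H * (x ^ (p+1) / (p+1))) atTop (𝓝 0) := by
    have h := (tendsto_rpow_mul_exp_neg_mul_atTop_nhds_zero (p+1) θ hθ).const_mul (H / (p+1))
    rw [mul_zero] at h
    refine h.congr fun x => ?_
    ring
  have t2 : Tendsto (fun x : ℝ => H * x ^ p * (1/θ)) atTop (𝓝 0) := by
    have h := (tendsto_rpow_neg_atTop (y := 1 - 2*H) (by linarith)).const_mul (H * (1/θ))
    rw [mul_zero] at h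
    refine h.congr fun x => ?_
    rw [show -(1 - 2*H) = p by rw [hpdef]; ring]
    ring
  have tb : Tendsto (fun T : ℝ =>
      Real.exp (-θ * (T/2)) * H * ((T/2) ^ (p+1) / (p+1)) + H * (T/2) ^ p * (1/θ))
      atTop (𝓝 0) := by
    have := (t1.comp hhalf).add (t2.comp hhalf)
    rw [add_zero] at this
    exact this
  exact tendsto_of_tendsto_of_tendsto_of_le_of_le' tendsto_const_nhds tb
    (Filter.Eventually.of_forall hlow)
    (by filter_upwards [Filter.eventually_ge_atTop (1:ℝ)] with T hT using hupper T hT)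

open MeasureTheory Real Set Filter

theorem stmt19 (H θ : ℝ) (hH : H ∈ Set.Ioo (0:ℝ) (1/2)) (hθ : 0 < θ) :
    Filter.Tendsto
      (fun T : ℝ =>
        θ * (∫ t in Set.Ioc (0:ℝ) T, ∫ s in Set.Ioc (0:ℝ) T,
            Real.exp (-θ * (T - t) - θ * (T - s)) *
              (H * (t ^ (2*H - 1) - Real.sign (t - s) * |t - s| ^ (2*H - 1))))
          + ∫ t in Set.Ioc (0:ℝ) T,
              Real.exp (-θ * (T - t)) * (H * (t ^ (2*H - 1) + (T - t) ^ (2*H - 1))))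
      Filter.atTop
      (nhds (H * Real.Gamma (2*H) * θ ^ (-(2*H)))) := by
  obtain ⟨hH1, hH2⟩ := hH
  have hp : (-1:ℝ) < 2*H - 1 := by linarith
  have hA := tendstoA hH1 hH2 hθ
  have hJ := tendstoJ hH1 hH2 hθ
  have hexp : Tendsto (fun T : ℝ => Real.exp (-θ * T)) atTop (𝓝 0) := by
    have h1 : Tendsto (fun T : ℝ => θ * T) atTop atTop :=
      Tendsto.const_mul_atTop hθ tendsto_id
    have h2 := Real.tendsto_exp_neg_atTop_nhds_zero.comp h1
    refine h2.congr fun T => ?_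
    simp [neg_mul]
  have hGval : ∀ T : ℝ, 0 ≤ T →
      (∫ s in Ioc (0:ℝ) T, Real.exp (-θ * (T - s))) = 1/θ - Real.exp (-θ * T)/θ := by
    intro T hT
    rw [← intervalIntegral.integral_of_le hT, exp_int_eval 0 T hθ, sub_self, mul_zero,
      Real.exp_zero, sub_zero]
  have hG : Tendsto (fun T : ℝ => ∫ s in Ioc (0:ℝ) T, Real.exp (-θ * (T - s))) atTop
      (𝓝 (1/θ)) := by
    have h3 : Tendsto (fun T : ℝ => 1/θ - Real.exp (-θ * T)/θ) atTop (𝓝 (1/θ - 0/θ)) :=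
      tendsto_const_nhds.sub (hexp.div_const θ)
    rw [zero_div, sub_zero] at h3
    refine h3.congr' ?_
    filter_upwards [Filter.eventually_ge_atTop (0:ℝ)] with T hT
    exact (hGval T hT).symm
  have hcomb := ((hA.mul hG).const_mul θ).add (hA.add hJ)
  rw [zero_mul, mul_zero, zero_add, zero_add] at hcomb
  refine hcomb.congr' ?_
  filter_upwards [Filter.eventually_ge_atTop (0:ℝ)] with T hT0
  rw [double_eq hp hθ hT0, boundary_eq hp hθ hT0]
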